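/- arXiv:1603.03096 — 4 statements merged into one kernel-verified Lean document; each statement's English description precedes it below -/
import Mathlib

section
/- Let n ≥ 1, let ι be a finite index type of cardinality n², let {X_a}_{a∈ι} be a basis of the complex vector space of n×n complex matrices, and let {X′_a}_{a∈ι} be a family of n×n complex matrices satisfying the duality relations Tr((X′_a)ᴴ X_b) = δ_{ab} for all a, b ∈ ι. Then Σ_{a∈ι} X_a ⊗ (X′_a)ᴴ = Σ_{i,j} E_{ij} ⊗ E_{ji}, where the sum on the right runs over all i, j, E_{ij} denotes the matrix unit (the n×n matrix with a 1 in entry (i,j) and 0 elsewhere), and ⊗ denotes the Kronecker product of matrices. In particular, the witness operator W := Σ_a X_a ⊗ (X′_a)ᴴ is independent of the chosen dual basis pair and equals the swap operator on ℂⁿ ⊗ ℂⁿ. -/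
open Matrix Kronecker

lemma trace_conjT_mul_std {n : ℕ} (A : Matrix (Fin n) (Fin n) ℂ) (l k : Fin n) :
    (Aᴴ * Matrix.single l k 1).trace = star (A l k) := by
  simp [Matrix.trace, Matrix.diag, Matrix.mul_apply, Matrix.single,
    Matrix.conjTranspose_apply, Finset.sum_ite_eq, ite_and]

/-- If `{X_a}` is a basis of the `n×n` complex matrices (indexed by a finite
type `ι` of cardinality `n²`) and `{X′_a}` is a dual family, i.e.
`Tr((X′_a)ᴴ X_b) = δ_{ab}`, then `Σ_a X_a ⊗ (X′_a)ᴴ = Σ_{i,j} E_{ij} ⊗ E_{ji}`,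
the swap operator on `ℂⁿ ⊗ ℂⁿ`. -/
theorem witness_basis_independent
    (n : ℕ) (hn : 1 ≤ n)
    (ι : Type) [Fintype ι] [DecidableEq ι] (hcard : Fintype.card ι = n ^ 2)
    (X X' : ι → Matrix (Fin n) (Fin n) ℂ)
    (hbasis : ∃ b : Module.Basis ι ℂ (Matrix (Fin n) (Fin n) ℂ), ∀ a, b a = X a)
    (hdual : ∀ a b : ι, ((X' a)ᴴ * X b).trace = if a = b then 1 else 0) :
    ∑ a : ι, (X a) ⊗ₖ (X' a)ᴴ =
      ∑ i : Fin n, ∑ j : Fin n,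
        (Matrix.single i j (1 : ℂ)) ⊗ₖ (Matrix.single j i (1 : ℂ)) := by
  obtain ⟨b, hb⟩ := hbasis
  have key : ∀ (M : Matrix (Fin n) (Fin n) ℂ) (a : ι),
      ((X' a)ᴴ * M).trace = b.repr M a := by
    intro M a
    conv_lhs => rw [← b.sum_repr M]
    rw [Finset.mul_sum, Matrix.trace_sum]
    simp only [Matrix.mul_smul, Matrix.trace_smul, hb, hdual, smul_eq_mul,
      mul_ite, mul_one, mul_zero, Finset.sum_ite_eq, Finset.mem_univ, if_true]
  have expand : ∀ (M : Matrix (Fin n) (Fin n) ℂ),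
      ∑ a, ((X' a)ᴴ * M).trace • X a = M := by
    intro M
    conv_rhs => rw [← b.sum_repr M]
    simp [key, hb]
  ext ⟨i, k⟩ ⟨j, l⟩
  have h := congrFun (congrFun (expand (Matrix.single l k 1)) i) j
  simp only [Matrix.sum_apply, Matrix.smul_apply, trace_conjT_mul_std,
    smul_eq_mul] at h
  simp only [Matrix.sum_apply, Matrix.kroneckerMap_apply,
    Matrix.conjTranspose_apply]
  calc ∑ a : ι, X a i j * star (X' a l k)
      = ∑ a : ι, star (X' a l k) * X a i j := by
        exact Finset.sum_congr rfl fun a _ => mul_comm _ _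
    _ = Matrix.single l k 1 i j := h
    _ = ∑ p : Fin n, ∑ q : Fin n,
        Matrix.single p q (1 : ℂ) i j * Matrix.single q p 1 k l := by
        simp [Matrix.single, ite_and, Finset.sum_ite_eq, eq_comm]
end

section
/- Let n ≥ 1 and let W := Σ_{i,j} E_{ij} ⊗ E_{ji} be the swap operator on ℂⁿ ⊗ ℂⁿ. Let σ be a separable state on ℂⁿ ⊗ ℂⁿ, i.e., σ = Σ_{k∈K} p_k · σ_{1,k} ⊗ σ_{2,k} for a finite index set K, nonnegative reals p_k with Σ_k p_k = 1, and density matrices σ_{1,k}, σ_{2,k} on ℂⁿ. Then Tr(σ·W) is a real number satisfying 0 ≤ Tr(σ·W) ≤ 1. -/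
open Matrix Kronecker ComplexOrder

lemma trace_mul_stdBasis {m : Type*} [Fintype m] [DecidableEq m]
    (A : Matrix m m ℂ) (i j : m) :
    (A * Matrix.single i j (1 : ℂ)).trace = A j i := by
  simp [Matrix.trace, Matrix.diag, Matrix.mul_apply, Matrix.single, ite_and]

lemma psd_diag_nonneg {m : Type*} [Fintype m] [DecidableEq m]
    {M : Matrix m m ℂ} (hM : M.PosSemidef) (i : m) : (0:ℂ) ≤ M i i := by
  have := hM.diag_nonneg (i := i)
  simpa [dotProduct, Matrix.mulVec, Pi.single_apply, Finset.sum_ite_eq,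
    dotProduct_single] using this

lemma trace_mul_psd_bounds {m : Type*} [Fintype m] [DecidableEq m]
    (A B : Matrix m m ℂ) (hA : A.PosSemidef) (hB : B.PosSemidef)
    (trA : A.trace = 1) (trB : B.trace = 1) :
    (A * B).trace.im = 0 ∧ 0 ≤ (A * B).trace.re ∧ (A * B).trace.re ≤ 1 := by
  classical
  set U : Matrix m m ℂ := (Matrix.IsHermitian.eigenvectorUnitary hB.1 : Matrix m m ℂ) with hU
  set lam : m → ℝ := hB.1.eigenvalues with hlam
  have hBeq : B = U * Matrix.diagonal (RCLike.ofReal ∘ lam) * star U := hB.1.spectral_theorem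
  have hUU : U * star U = 1 := (Matrix.mem_unitaryGroup_iff).mp
    (Matrix.IsHermitian.eigenvectorUnitary hB.1).2
  have hUU' : star U * U = 1 := (Matrix.mem_unitaryGroup_iff').mp
    (Matrix.IsHermitian.eigenvectorUnitary hB.1).2
  set M : Matrix m m ℂ := star U * A * U with hMdef
  have hM : M.PosSemidef := by
    have := hA.mul_mul_conjTranspose_same (star U)
    simpa [hMdef, Matrix.star_eq_conjTranspose, Matrix.conjTranspose_conjTranspose] using this
  -- trace (A*B) = trace (M * diagonal lam)
  have key : (A * B).trace = ∑ i, M i i * (lam i : ℂ) := by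
    rw [hBeq]
    have : A * (U * Matrix.diagonal (RCLike.ofReal ∘ lam) * star U)
        = A * U * Matrix.diagonal (RCLike.ofReal ∘ lam) * star U := by
      simp only [Matrix.mul_assoc]
    rw [this, Matrix.trace_mul_cycle, ← Matrix.mul_assoc, ← hMdef]
    simp [Matrix.trace, Matrix.diag, Matrix.mul_diagonal]
  -- trace M = 1
  have trM : M.trace = 1 := by
    rw [hMdef, Matrix.trace_mul_cycle, hUU, Matrix.one_mul, trA]
  -- sum of eigenvalues = 1
  have hsumlam : ∑ i, lam i = 1 := by
    have : B.trace = ∑ i, (lam i : ℂ) := by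
      rw [hBeq, Matrix.trace_mul_cycle, hUU', Matrix.one_mul]
      simp [Matrix.trace, Matrix.diag]
    rw [trB] at this
    have := congrArg Complex.re this.symm
    simpa using this
  have hlamnn : ∀ i, 0 ≤ lam i := hB.eigenvalues_nonneg
  have hdiag : ∀ i, (0:ℂ) ≤ M i i := psd_diag_nonneg hM
  have him : ∀ i, (M i i).im = 0 := fun i => ((Complex.le_def.mp (hdiag i)).2).symm
  have hre : ∀ i, 0 ≤ (M i i).re := fun i => by
    simpa using (Complex.le_def.mp (hdiag i)).1
  have hsumre : ∑ i, (M i i).re = 1 := by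
    have := congrArg Complex.re trM
    simpa [Matrix.trace, Matrix.diag, Complex.re_sum] using this
  have hrele : ∀ i, (M i i).re ≤ 1 := by
    intro i
    rw [← hsumre]
    exact Finset.single_le_sum (fun j _ => hre j) (Finset.mem_univ i)
  constructor
  · rw [key]
    simp [Complex.im_sum, Complex.mul_im, him]
  constructor
  · rw [key]
    rw [Complex.re_sum]
    apply Finset.sum_nonneg
    intro i _
    simp only [Complex.mul_re, Complex.ofReal_re, Complex.ofReal_im, him, mul_zero, sub_zero]
    exact mul_nonneg (hre i) (hlamnn i)
  · rw [key, Complex.re_sum]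
    calc ∑ i, (M i i * (lam i : ℂ)).re ≤ ∑ i, lam i := by
          apply Finset.sum_le_sum
          intro i _
          simp only [Complex.mul_re, Complex.ofReal_re, Complex.ofReal_im, mul_zero, sub_zero]
          calc (M i i).re * lam i ≤ 1 * lam i :=
                mul_le_mul_of_nonneg_right (hrele i) (hlamnn i)
            _ = lam i := one_mul _
      _ = 1 := hsumlam

/-- With `W := Σ_{i,j} E_{ij} ⊗ E_{ji}` the swap operator on `ℂⁿ ⊗ ℂⁿ`,
for every separable state `σ = Σ_k p_k σ_{1,k} ⊗ σ_{2,k}` (a finite convex combination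
of Kronecker products of density matrices), `Tr(σ·W)` is a real number in `[0,1]`. -/
theorem swap_witness_separable_bounds
    (n : ℕ) (hn : 1 ≤ n)
    (W : Matrix (Fin n × Fin n) (Fin n × Fin n) ℂ)
    (hW : W = ∑ i : Fin n, ∑ j : Fin n,
        (Matrix.single i j (1 : ℂ)) ⊗ₖ (Matrix.single j i (1 : ℂ)))
    (K : Type) [Fintype K]
    (p : K → ℝ) (hp : ∀ k, 0 ≤ p k) (hpsum : ∑ k, p k = 1)
    (σ₁ σ₂ : K → Matrix (Fin n) (Fin n) ℂ)
    (h₁pos : ∀ k, (σ₁ k).PosSemidef) (h₁tr : ∀ k, (σ₁ k).trace = 1)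
    (h₂pos : ∀ k, (σ₂ k).PosSemidef) (h₂tr : ∀ k, (σ₂ k).trace = 1)
    (σ : Matrix (Fin n × Fin n) (Fin n × Fin n) ℂ)
    (hσ : σ = ∑ k : K, (p k : ℂ) • ((σ₁ k) ⊗ₖ (σ₂ k))) :
    (σ * W).trace.im = 0 ∧ 0 ≤ (σ * W).trace.re ∧ (σ * W).trace.re ≤ 1 := by
  -- trace of (A⊗B)*W equals trace (A*B)
  have kron : ∀ A B : Matrix (Fin n) (Fin n) ℂ, ((A ⊗ₖ B) * W).trace = (A * B).trace := by
    intro A B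
    rw [hW, Finset.mul_sum, Matrix.trace_sum]
    simp_rw [Finset.mul_sum, Matrix.trace_sum, ← Matrix.mul_kronecker_mul,
      Matrix.trace_kronecker, trace_mul_stdBasis]
    rw [Matrix.trace_mul_comm]
    simp [Matrix.trace, Matrix.diag, Matrix.mul_apply]
    rw [Finset.sum_comm]
    simp [mul_comm]
    exact Finset.sum_comm
  have hexp : (σ * W).trace = ∑ k, (p k : ℂ) * ((σ₁ k) * (σ₂ k)).trace := by
    rw [hσ, Finset.sum_mul, Matrix.trace_sum]
    congr 1; funext k
    rw [Matrix.smul_mul, Matrix.trace_smul, kron]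
    simp
  have bounds := fun k => trace_mul_psd_bounds (σ₁ k) (σ₂ k) (h₁pos k) (h₂pos k) (h₁tr k) (h₂tr k)
  refine ⟨?_, ?_, ?_⟩
  · rw [hexp, Complex.im_sum]
    apply Finset.sum_eq_zero
    intro k _
    simp [Complex.mul_im, (bounds k).1]
  · rw [hexp, Complex.re_sum]
    apply Finset.sum_nonneg
    intro k _
    simp only [Complex.mul_re, Complex.ofReal_re, Complex.ofReal_im, zero_mul, sub_zero]
    exact mul_nonneg (hp k) (bounds k).2.1
  · rw [hexp, Complex.re_sum]
    calc ∑ k, ((p k : ℂ) * ((σ₁ k) * (σ₂ k)).trace).re ≤ ∑ k, p k := by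
          apply Finset.sum_le_sum
          intro k _
          simp only [Complex.mul_re, Complex.ofReal_re, Complex.ofReal_im, zero_mul, sub_zero]
          calc p k * (((σ₁ k) * (σ₂ k)).trace).re ≤ p k * 1 :=
                mul_le_mul_of_nonneg_left (bounds k).2.2 (hp k)
            _ = p k := mul_one _
      _ = 1 := hpsum
end

section
/- Let n ≥ 1 and let W := Σ_{i,j} E_{ij} ⊗ E_{ji} be the swap operator on ℂⁿ ⊗ ℂⁿ. If ρ is a density matrix on ℂⁿ ⊗ ℂⁿ such that the real number Tr(ρ·W) satisfies Tr(ρ·W) < 0 or Tr(ρ·W) > 1, then ρ is entangled, i.e., ρ is not a separable state. -/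
open Matrix Kronecker ComplexOrder

/-- A separable state on `ℂⁿ ⊗ ℂⁿ`: a finite convex combination of Kronecker products
of density matrices on `ℂⁿ`. -/
def IsSeparableState (n : ℕ) (σ : Matrix (Fin n × Fin n) (Fin n × Fin n) ℂ) : Prop :=
  ∃ (m : ℕ) (p : Fin m → ℝ) (σ₁ σ₂ : Fin m → Matrix (Fin n) (Fin n) ℂ),
    (∀ k, 0 ≤ p k) ∧ (∑ k, p k = 1) ∧
    (∀ k, (σ₁ k).PosSemidef) ∧ (∀ k, (σ₁ k).trace = 1) ∧
    (∀ k, (σ₂ k).PosSemidef) ∧ (∀ k, (σ₂ k).trace = 1) ∧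
    σ = ∑ k : Fin m, (p k : ℂ) • ((σ₁ k) ⊗ₖ (σ₂ k))

section Aux

variable {m : Type*} [Fintype m] [DecidableEq m]

lemma aux_trace_mul_stdBasisMatrix (M : Matrix m m ℂ) (i j : m) :
    (M * Matrix.single i j (1 : ℂ)).trace = M j i := by
  simp [Matrix.trace, Matrix.diag, Matrix.mul_apply, Matrix.single, ite_and, eq_comm]

lemma aux_trace_nonneg {M : Matrix m m ℂ} (hM : M.PosSemidef) : 0 ≤ M.trace := by
  rw [Matrix.trace]
  apply Finset.sum_nonneg
  intro i _
  exact hM.diag_nonneg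

lemma aux_one_sub_psd {A : Matrix m m ℂ} (hA : A.PosSemidef) (htr : A.trace = 1) :
    ((1 : Matrix m m ℂ) - A).PosSemidef := by
  have hH := hA.1
  have hsum : ∑ i, hH.eigenvalues i = 1 := by
    have h1 : A.trace = ∑ i, (hH.eigenvalues i : ℂ) := by
      conv_lhs => rw [hH.spectral_theorem, Unitary.conjStarAlgAut_apply]
      rw [Matrix.trace_mul_cycle]
      simp [Matrix.trace_diagonal]
    rw [htr] at h1
    exact_mod_cast h1.symm
  have hle : ∀ i, hH.eigenvalues i ≤ 1 := by
    intro i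
    rw [← hsum]
    exact Finset.single_le_sum (fun j _ => hA.eigenvalues_nonneg j) (Finset.mem_univ i)
  have hdiag : ((Matrix.diagonal (fun i => 1 - (hH.eigenvalues i : ℂ))) :
      Matrix m m ℂ).PosSemidef := by
    refine Matrix.posSemidef_diagonal_iff.mpr fun i => ?_
    rw [Complex.le_def]
    constructor
    · simp [sub_nonneg, hle i]
    · simp
  have hU : ((hH.eigenvectorUnitary : Matrix m m ℂ)) *
      (star (hH.eigenvectorUnitary : Matrix m m ℂ)) = 1 :=
    Matrix.mem_unitaryGroup_iff.mp hH.eigenvectorUnitary.2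
  have key : (1 : Matrix m m ℂ) - A =
      (hH.eigenvectorUnitary : Matrix m m ℂ) *
        (Matrix.diagonal (fun i => 1 - (hH.eigenvalues i : ℂ))) *
        (star (hH.eigenvectorUnitary : Matrix m m ℂ)) := by
    have hA' := hH.spectral_theorem
    rw [Unitary.conjStarAlgAut_apply] at hA'
    have : (Matrix.diagonal (fun i => 1 - (hH.eigenvalues i : ℂ))) =
        1 - Matrix.diagonal (RCLike.ofReal ∘ hH.eigenvalues) := by
      rw [← Matrix.diagonal_one, ← Matrix.diagonal_sub]
      rfl
    rw [this, Matrix.mul_sub, Matrix.sub_mul, Matrix.mul_one, hU, ← hA']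
  rw [key]
  exact hdiag.mul_mul_conjTranspose_same _

lemma aux_trace_mul_mem_Icc {A B : Matrix m m ℂ} (hA : A.PosSemidef) (hB : B.PosSemidef)
    (htrA : A.trace = 1) (htrB : B.trace = 1) :
    0 ≤ (A * B).trace ∧ (A * B).trace ≤ 1 := by
  obtain ⟨C, rfl⟩ : ∃ C : Matrix m m ℂ, B = Cᴴ * C := by
    open MatrixOrder in exact CStarAlgebra.nonneg_iff_eq_star_mul_self.mp hB.nonneg
  have hcyc : (A * (Cᴴ * C)).trace = (C * A * Cᴴ).trace := by
    rw [Matrix.trace_mul_cycle' A Cᴴ C, ← Matrix.mul_assoc]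
  constructor
  · rw [hcyc]
    exact aux_trace_nonneg (hA.mul_mul_conjTranspose_same C)
  · have h1 : (C * (1 - A) * Cᴴ).trace =
        1 - (A * (Cᴴ * C)).trace := by
      rw [hcyc, Matrix.mul_sub, Matrix.mul_one, Matrix.sub_mul, Matrix.trace_sub]
      congr 1
      rw [← htrB, Matrix.trace_mul_comm]
    have h2 := aux_trace_nonneg (((aux_one_sub_psd hA htrA)).mul_mul_conjTranspose_same C)
    rw [h1] at h2
    exact sub_nonneg.mp h2

lemma aux_trace_kron_swap (n : ℕ) (A B : Matrix (Fin n) (Fin n) ℂ) :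
    ((A ⊗ₖ B) * (∑ i : Fin n, ∑ j : Fin n,
        (Matrix.single i j (1 : ℂ)) ⊗ₖ (Matrix.single j i (1 : ℂ)))).trace
      = (A * B).trace := by
  rw [Finset.mul_sum, Matrix.trace_sum]
  simp_rw [Finset.mul_sum, Matrix.trace_sum, ← Matrix.mul_kronecker_mul,
    Matrix.trace_kronecker, aux_trace_mul_stdBasisMatrix]
  rw [Finset.sum_comm]
  simp [Matrix.trace, Matrix.diag, Matrix.mul_apply]

end Aux

/-- With `W := Σ_{i,j} E_{ij} ⊗ E_{ji}` the swap operator on `ℂⁿ ⊗ ℂⁿ`,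
if a density matrix `ρ` on `ℂⁿ ⊗ ℂⁿ` satisfies `Tr(ρ·W) < 0` or `Tr(ρ·W) > 1`,
then `ρ` is entangled, i.e. not separable. -/
theorem swap_witness_detects_entanglement
    (n : ℕ) (hn : 1 ≤ n)
    (W : Matrix (Fin n × Fin n) (Fin n × Fin n) ℂ)
    (hW : W = ∑ i : Fin n, ∑ j : Fin n,
        (Matrix.single i j (1 : ℂ)) ⊗ₖ (Matrix.single j i (1 : ℂ)))
    (ρ : Matrix (Fin n × Fin n) (Fin n × Fin n) ℂ)
    (hρpos : ρ.PosSemidef) (hρtr : ρ.trace = 1)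
    (hviol : (ρ * W).trace.re < 0 ∨ 1 < (ρ * W).trace.re) :
    ¬ IsSeparableState n ρ := by
  rintro ⟨m, p, σ₁, σ₂, hp, hpsum, h1pos, h1tr, h2pos, h2tr, hρ⟩
  have htr : (ρ * W).trace = ∑ k : Fin m, (p k : ℂ) * ((σ₁ k) * (σ₂ k)).trace := by
    rw [hρ, Finset.sum_mul, Matrix.trace_sum]
    congr 1
    ext k
    rw [Matrix.smul_mul, Matrix.trace_smul, hW, aux_trace_kron_swap, smul_eq_mul]
  have hbounds : ∀ k : Fin m, 0 ≤ ((σ₁ k) * (σ₂ k)).trace.re ∧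
      ((σ₁ k) * (σ₂ k)).trace.re ≤ 1 := by
    intro k
    obtain ⟨h0, h1⟩ := aux_trace_mul_mem_Icc (h1pos k) (h2pos k) (h1tr k) (h2tr k)
    exact ⟨(Complex.le_def.mp h0).1, (Complex.le_def.mp h1).1⟩
  have hre : (ρ * W).trace.re = ∑ k : Fin m, p k * ((σ₁ k) * (σ₂ k)).trace.re := by
    rw [htr]
    rw [Complex.re_sum]
    congr 1; ext k
    simp [Complex.mul_re]
  rcases hviol with h | h
  · have : 0 ≤ (ρ * W).trace.re := by
      rw [hre]
      exact Finset.sum_nonneg fun k _ => mul_nonneg (hp k) (hbounds k).1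
    linarith
  · have : (ρ * W).trace.re ≤ 1 := by
      rw [hre, ← hpsum]
      exact Finset.sum_le_sum fun k _ => by
        nlinarith [(hbounds k).2, hp k, (hbounds k).1]
    linarith
end

section
/- Let n ≥ 1, let Λ be a positive ℂ-linear map on n×n complex matrices (Λ(A) is positive semidefinite whenever A is positive semidefinite), and define the partially transformed witness V := Σ_{i,j} E_{ij} ⊗ Λ(E_{ji}), where E_{ij} are the matrix units and ⊗ is the Kronecker product. Then for every separable state σ on ℂⁿ ⊗ ℂⁿ, the real number Tr(σ·V) satisfies Tr(σ·V) ≥ 0. -/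
open Matrix Kronecker ComplexOrder

lemma psd_trace_nonneg {m : Type*} [Fintype m] [DecidableEq m]
    {M : Matrix m m ℂ} (hM : M.PosSemidef) : 0 ≤ M.trace := by
  exact hM.trace_nonneg

open scoped MatrixOrder in
lemma psd_trace_mul_nonneg {m : Type*} [Fintype m] [DecidableEq m]
    {A B : Matrix m m ℂ} (hA : A.PosSemidef) (hB : B.PosSemidef) :
    0 ≤ (A * B).trace := by
  have hS : CFC.sqrt B * CFC.sqrt B = B := CFC.sqrt_mul_sqrt_self B hB.nonneg
  have h1 : (CFC.sqrt B * A * CFC.sqrt B).trace = (A * B).trace := by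
    rw [Matrix.trace_mul_cycle, hS, Matrix.trace_mul_comm]
  rw [← h1]
  have hconj : (CFC.sqrt B * A * CFC.sqrt B).PosSemidef := by
    have := hA.mul_mul_conjTranspose_same (CFC.sqrt B)
    rwa [(CFC.sqrt_nonneg B).posSemidef.1.eq] at this
  exact psd_trace_nonneg hconj

lemma trace_mul_stdBasisMatrix {m : Type*} [Fintype m] [DecidableEq m]
    (M : Matrix m m ℂ) (i j : m) :
    (M * Matrix.single i j (1 : ℂ)).trace = M j i := by
  simp [Matrix.trace, Matrix.diag, Matrix.mul_apply, Matrix.single, ite_and]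

/-- If `Λ` is a positive ℂ-linear map on `n×n` complex matrices and
`V := Σ_{i,j} E_{ij} ⊗ Λ(E_{ji})`, then for every separable state `σ` on `ℂⁿ ⊗ ℂⁿ`,
`Tr(σ·V)` is a nonnegative real number. -/
theorem partially_transformed_witness_nonneg_on_separable
    (n : ℕ) (hn : 1 ≤ n)
    (Λ : Matrix (Fin n) (Fin n) ℂ →ₗ[ℂ] Matrix (Fin n) (Fin n) ℂ)
    (hΛpos : ∀ A : Matrix (Fin n) (Fin n) ℂ, A.PosSemidef → (Λ A).PosSemidef)
    (V : Matrix (Fin n × Fin n) (Fin n × Fin n) ℂ)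
    (hV : V = ∑ i : Fin n, ∑ j : Fin n,
        (Matrix.single i j (1 : ℂ)) ⊗ₖ (Λ (Matrix.single j i (1 : ℂ))))
    (K : Type) [Fintype K]
    (p : K → ℝ) (hp : ∀ k, 0 ≤ p k) (hpsum : ∑ k, p k = 1)
    (σ₁ σ₂ : K → Matrix (Fin n) (Fin n) ℂ)
    (h₁pos : ∀ k, (σ₁ k).PosSemidef) (h₁tr : ∀ k, (σ₁ k).trace = 1)
    (h₂pos : ∀ k, (σ₂ k).PosSemidef) (h₂tr : ∀ k, (σ₂ k).trace = 1)
    (σ : Matrix (Fin n × Fin n) (Fin n × Fin n) ℂ)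
    (hσ : σ = ∑ k : K, (p k : ℂ) • ((σ₁ k) ⊗ₖ (σ₂ k))) :
    (σ * V).trace.im = 0 ∧ 0 ≤ (σ * V).trace.re := by
  -- key: for each k, ((σ₁ k ⊗ₖ σ₂ k) * V).trace = (σ₂ k * Λ (σ₁ k)).trace
  have key : ∀ k, ((σ₁ k ⊗ₖ σ₂ k) * V).trace = (σ₂ k * Λ (σ₁ k)).trace := by
    intro k
    rw [hV]
    rw [Finset.mul_sum]
    simp_rw [Finset.mul_sum]
    have hmk : ∀ a b : Fin n,
        (σ₁ k ⊗ₖ σ₂ k) * ((Matrix.single a b (1:ℂ)) ⊗ₖ (Λ (Matrix.single b a 1)))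
          = (σ₁ k * Matrix.single a b 1) ⊗ₖ (σ₂ k * Λ (Matrix.single b a 1)) :=
      fun a b => (Matrix.mul_kronecker_mul (σ₁ k) (Matrix.single a b 1) (σ₂ k)
        (Λ (Matrix.single b a 1))).symm
    simp_rw [hmk]
    simp_rw [Matrix.trace_sum]
    simp_rw [Matrix.trace_kronecker]
    have hsb : ∀ (a b : Fin n) (c : ℂ),
        Matrix.single a b c = c • Matrix.single a b (1 : ℂ) := by
      intros a b c; rw [Matrix.smul_single, smul_eq_mul, mul_one]
    have hΛ : Λ (σ₁ k) = ∑ a : Fin n, ∑ b : Fin n,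
        σ₁ k a b • Λ (Matrix.single a b (1:ℂ)) := by
      conv_lhs => rw [Matrix.matrix_eq_sum_single (σ₁ k)]
      rw [map_sum]
      refine Finset.sum_congr rfl fun a _ => ?_
      rw [map_sum]
      refine Finset.sum_congr rfl fun b _ => ?_
      rw [hsb, _root_.map_smul]
    rw [hΛ]
    simp_rw [Finset.mul_sum, Matrix.mul_smul, Matrix.trace_sum, Matrix.trace_smul,
      smul_eq_mul]
    rw [Finset.sum_comm]
    refine Finset.sum_congr rfl fun i _ => Finset.sum_congr rfl fun x _ => ?_
    rw [trace_mul_stdBasisMatrix]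
  have htr : (σ * V).trace = ∑ k, (p k : ℂ) * (σ₂ k * Λ (σ₁ k)).trace := by
    rw [hσ, Finset.sum_mul, Matrix.trace_sum]
    refine Finset.sum_congr rfl fun k _ => ?_
    rw [Matrix.smul_mul, Matrix.trace_smul, smul_eq_mul, key]
  have hnn : 0 ≤ (σ * V).trace := by
    rw [htr]
    apply Finset.sum_nonneg
    intro k _
    have h1 : 0 ≤ (σ₂ k * Λ (σ₁ k)).trace :=
      psd_trace_mul_nonneg (h₂pos k) (hΛpos _ (h₁pos k))
    have h2 : (0 : ℂ) ≤ (p k : ℂ) := by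
      rw [Complex.le_def]; simp [hp k]
    exact mul_nonneg h2 h1
  rw [Complex.nonneg_iff] at hnn
  exact ⟨hnn.2.symm, hnn.1⟩
end
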